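/- Let Ω ⊆ ℝⁿ be a Borel set and define ω(a) = |B(a,1) ∩ Ω| (Lebesgue measure of the intersection of Ω with the closed unit ball centered at a). If ω^p is integrable over Ω for some p > 0, then ω(a) → 0 as |a| → ∞. -/

import Mathlib

open MeasureTheory Filter Metric Set

/-- **Lemma (Rugh/Georgescu).** If `Ω ⊆ ℝⁿ` is Borel and `ω(a) = |B(a,1) ∩ Ω|`, and `ω^p` is
integrable over `Ω` for some `p > 0`, then `ω(a) → 0` as `|a| → ∞`. -/
theorem stmt0 (n : ℕ) (Ω : Set (EuclideanSpace ℝ (Fin n))) (hΩ : MeasurableSet Ω)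
    (p : ℝ) (hp : 0 < p)
    (hint : ∫⁻ x in Ω, (volume (closedBall x 1 ∩ Ω)) ^ p < ⊤) :
    Tendsto (fun a => volume (closedBall a 1 ∩ Ω))
      (Bornology.cobounded (EuclideanSpace ℝ (Fin n))) (nhds 0) := by
  let E := EuclideanSpace ℝ (Fin n)
  set g : E → ENNReal := fun x => (volume (closedBall x 1 ∩ Ω)) ^ p with hg
  set m : Measure E := (volume.restrict Ω).withDensity g with hm
  have hmapp : ∀ s : Set E, MeasurableSet s → m s = ∫⁻ x in s ∩ Ω, g x := by
    intro s hs
    rw [hm, withDensity_apply _ hs, Measure.restrict_restrict hs]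
  have hmuniv : m univ ≠ ⊤ := by
    rw [hmapp univ MeasurableSet.univ, Set.univ_inter]; exact hint.ne
  -- tail of `m` tends to 0
  have htail : Tendsto (fun k : ℕ => m ((closedBall (0:E) k)ᶜ)) atTop (nhds 0) := by
    have h0 : (⋂ k : ℕ, (closedBall (0:E) k)ᶜ) = ∅ := by
      ext x
      simp only [Set.mem_iInter, Set.mem_compl_iff, mem_closedBall, not_le, Set.mem_empty_iff_false,
        iff_false, not_forall, not_lt]
      obtain ⟨k, hk⟩ := exists_nat_ge (dist x 0)
      exact ⟨k, hk⟩
    have h := tendsto_measure_iInter_atTop (μ := m)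
      (s := fun k : ℕ => (closedBall (0:E) k)ᶜ)
      (fun k => measurableSet_closedBall.compl.nullMeasurableSet)
      (fun i j hij => Set.compl_subset_compl.2
        (closedBall_subset_closedBall (Nat.cast_le.2 hij)))
      ⟨0, ne_top_of_le_ne_top hmuniv (measure_mono (Set.subset_univ _))⟩
    rw [h0, measure_empty] at h
    exact h
  -- key estimate
  have hkey : ∀ a : E, (volume (closedBall a 2⁻¹ ∩ Ω)) ^ (p + 1) ≤ m (closedBall a 2⁻¹) := by
    intro a
    set c := volume (closedBall a 2⁻¹ ∩ Ω) with hc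
    have hcfin : c ≠ ⊤ :=
      (lt_of_le_of_lt (measure_mono Set.inter_subset_left) measure_closedBall_lt_top).ne
    have hmeas : MeasurableSet (closedBall a 2⁻¹ ∩ Ω) := measurableSet_closedBall.inter hΩ
    have hle : ∀ x ∈ closedBall a 2⁻¹ ∩ Ω, c ^ p ≤ g x := by
      intro x hx
      refine ENNReal.rpow_le_rpow (measure_mono (Set.inter_subset_inter_left _ ?_)) hp.le
      intro y hy
      have h1 : dist y x ≤ dist y a + dist a x := dist_triangle _ _ _
      have h2 : dist y a ≤ 2⁻¹ := hy
      have h3 : dist a x ≤ 2⁻¹ := by rw [dist_comm]; exact hx.1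
      simp only [mem_closedBall]
      linarith
    calc c ^ (p + 1) = c ^ p * c := by
          rcases eq_or_ne c 0 with h | h
          · rw [h, ENNReal.zero_rpow_of_pos (by linarith), mul_zero]
          · rw [ENNReal.rpow_add _ _ h hcfin, ENNReal.rpow_one]
      _ = ∫⁻ _ in closedBall a 2⁻¹ ∩ Ω, c ^ p := by rw [setLIntegral_const]
      _ ≤ ∫⁻ x in closedBall a 2⁻¹ ∩ Ω, g x := setLIntegral_mono' hmeas hle
      _ = m (closedBall a 2⁻¹) := (hmapp _ measurableSet_closedBall).symm
  -- m of small balls tends to 0 at infinity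
  have hm0 : Tendsto (fun a : E => m (closedBall a 2⁻¹)) (Bornology.cobounded E) (nhds 0) := by
    rw [ENNReal.tendsto_nhds_zero]
    intro ε hε
    obtain ⟨k, hk⟩ := (ENNReal.tendsto_nhds_zero.1 htail ε hε).exists
    filter_upwards [eventually_cobounded_le_norm ((k : ℝ) + 1)] with a ha
    refine le_trans (measure_mono ?_) hk
    intro y hy
    have h2 : dist y a ≤ 2⁻¹ := hy
    have h3 : ‖a‖ - ‖y‖ ≤ ‖a - y‖ := norm_sub_norm_le _ _
    have h4 : ‖a - y‖ = dist y a := by rw [dist_comm, dist_eq_norm]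
    simp only [Set.mem_compl_iff, mem_closedBall, dist_zero_right, not_le]
    linarith
  -- ω' tends to 0 at infinity
  have hω' : Tendsto (fun a : E => volume (closedBall a 2⁻¹ ∩ Ω)) (Bornology.cobounded E)
      (nhds 0) := by
    have hcont : Tendsto (fun x : ENNReal => x ^ (1 / (p + 1))) (nhds 0) (nhds 0) := by
      have h := ENNReal.continuous_rpow_const (y := 1 / (p + 1)) |>.tendsto 0
      rwa [ENNReal.zero_rpow_of_pos (by positivity)] at h
    refine tendsto_of_tendsto_of_tendsto_of_le_of_le tendsto_const_nhds (hcont.comp hm0)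
      (fun a => zero_le) (fun a => ?_)
    calc volume (closedBall a 2⁻¹ ∩ Ω)
        = ((volume (closedBall a 2⁻¹ ∩ Ω)) ^ (p + 1)) ^ (1 / (p + 1)) := by
          rw [← ENNReal.rpow_mul, mul_one_div, div_self (by positivity), ENNReal.rpow_one]
      _ ≤ (m (closedBall a 2⁻¹)) ^ (1 / (p + 1)) :=
          ENNReal.rpow_le_rpow (hkey a) (by positivity)
  -- finite covering of the unit ball by balls of radius 1/2
  obtain ⟨t, -, htfin, htcov⟩ :=
    finite_cover_balls_of_compact (isCompact_closedBall (0:E) 1) (by norm_num : (0:ℝ) < 2⁻¹)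
  -- the covering bound
  have hbound : ∀ a : E, volume (closedBall a 1 ∩ Ω)
      ≤ ∑ v ∈ htfin.toFinset, volume (closedBall (a + v) 2⁻¹ ∩ Ω) := by
    intro a
    have hsub : closedBall a 1 ∩ Ω ⊆ ⋃ v ∈ htfin.toFinset, (closedBall (a + v) 2⁻¹ ∩ Ω) := by
      intro y hy
      have h1 : y - a ∈ closedBall (0:E) 1 := by
        simp only [mem_closedBall, dist_zero_right]
        rw [← dist_eq_norm]
        exact hy.1
      obtain ⟨v, hv⟩ := Set.mem_iUnion₂.1 (htcov h1)
      refine Set.mem_iUnion₂.2 ⟨v, htfin.mem_toFinset.2 hv.1, ?_, hy.2⟩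
      have h2 : dist (y - a) v < 2⁻¹ := hv.2
      simp only [mem_closedBall]
      have h5 : dist y (a + v) < 2⁻¹ := by
        calc dist y (a + v) = ‖y - (a + v)‖ := dist_eq_norm _ _
          _ = ‖y - a - v‖ := by congr 1; abel
          _ < 2⁻¹ := by rw [← dist_eq_norm]; exact h2
      exact h5.le
    exact le_trans (measure_mono hsub) (measure_biUnion_finset_le _ _)
  -- conclude
  have hsum : Tendsto (fun a : E => ∑ v ∈ htfin.toFinset, volume (closedBall (a + v) 2⁻¹ ∩ Ω))
      (Bornology.cobounded E) (nhds 0) := by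
    have hterm : ∀ v : E, Tendsto (fun a : E => volume (closedBall (a + v) 2⁻¹ ∩ Ω))
        (Bornology.cobounded E) (nhds 0) := by
      intro v
      refine hω'.comp ?_
      rw [← tendsto_norm_atTop_iff_cobounded]
      refine tendsto_atTop_mono (fun a => ?_)
        (tendsto_atTop_add_const_right _ (-‖v‖) tendsto_norm_cobounded_atTop)
      have : ‖a‖ ≤ ‖a + v‖ + ‖v‖ := by
        calc ‖a‖ = ‖a + v - v‖ := by congr 1; abel
          _ ≤ ‖a + v‖ + ‖v‖ := norm_sub_le _ _
      linarith
    have h := tendsto_finset_sum htfin.toFinset (fun v _ => hterm v)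
    simpa using h
  exact tendsto_of_tendsto_of_tendsto_of_le_of_le tendsto_const_nhds hsum
    (fun a => zero_le) hbound
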